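/- The set of squared side lengths of 2-dimensional squares with vertices in ℤ³ equals the set of sums of two integer squares, i.e., J(2,3) = I₂. -/

import Mathlib

/-- If `q ≡ 3 mod 4` is prime and `q ∣ a² + b²`, then `q ∣ a` and `q ∣ b`. -/
lemma lemB (q : ℕ) (hq : q.Prime) (hq3 : q % 4 = 3) (a b : ℤ)
    (h : (q : ℤ) ∣ a ^ 2 + b ^ 2) : (q : ℤ) ∣ a ∧ (q : ℤ) ∣ b := by
  haveI : Fact q.Prime := ⟨hq⟩
  have ha : (q : ℤ) ∣ a := by
    by_contra ha
    have h1 : ((a : ZMod q)) ^ 2 + ((b : ZMod q)) ^ 2 = 0 := by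
      have := (ZMod.intCast_zmod_eq_zero_iff_dvd _ q).mpr h
      push_cast at this
      exact this
    have ha' : (a : ZMod q) ≠ 0 := fun hc => ha ((ZMod.intCast_zmod_eq_zero_iff_dvd _ q).mp hc)
    have hsq : IsSquare (-1 : ZMod q) := by
      refine ⟨(b : ZMod q) * ((a : ZMod q))⁻¹, ?_⟩
      field_simp
      linear_combination -h1
    rw [ZMod.exists_sq_eq_neg_one_iff] at hsq
    exact hsq hq3
  refine ⟨ha, ?_⟩
  have hb2 : (q : ℤ) ∣ b ^ 2 := by
    have : (q : ℤ) ∣ (a ^ 2 + b ^ 2) - a ^ 2 := dvd_sub h (Dvd.dvd.pow ha two_ne_zero)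
    simpa using this
  exact (Nat.prime_iff_prime_int.mp hq).dvd_of_dvd_pow hb2

/-- Odd powers of a prime `q ≡ 3 mod 4` dividing a sum of two squares can be upgraded. -/
lemma lemA (q : ℕ) (hq : q.Prime) (hq3 : q % 4 = 3) :
    ∀ (k : ℕ) (a b : ℤ), (q : ℤ) ^ (2 * k + 1) ∣ a ^ 2 + b ^ 2 →
      (q : ℤ) ^ (2 * k + 2) ∣ a ^ 2 + b ^ 2 := by
  intro k
  induction k with
  | zero =>
    intro a b h
    have h1 : (q : ℤ) ∣ a ^ 2 + b ^ 2 := by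
      simpa using h
    obtain ⟨ha, hb⟩ := lemB q hq hq3 a b h1
    obtain ⟨a', rfl⟩ := ha
    obtain ⟨b', rfl⟩ := hb
    exact ⟨a' ^ 2 + b' ^ 2, by ring⟩
  | succ k ih =>
    intro a b h
    have h1 : (q : ℤ) ∣ a ^ 2 + b ^ 2 :=
      dvd_trans (dvd_pow_self _ (by omega)) h
    obtain ⟨ha, hb⟩ := lemB q hq hq3 a b h1
    obtain ⟨a', rfl⟩ := ha
    obtain ⟨b', rfl⟩ := hb
    have hq0 : ((q : ℤ) ^ 2) ≠ 0 := by
      have := hq.pos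
      positivity
    have h2 : (q : ℤ) ^ (2 * k + 1) ∣ a' ^ 2 + b' ^ 2 := by
      have hmul : (q : ℤ) ^ 2 * (q : ℤ) ^ (2 * k + 1) ∣ (q : ℤ) ^ 2 * (a' ^ 2 + b' ^ 2) := by
        have heq : (q : ℤ) ^ 2 * (a' ^ 2 + b' ^ 2) = (q * a') ^ 2 + (q * b') ^ 2 := by ring
        rw [heq, ← pow_add]
        have : 2 + (2 * k + 1) = 2 * (k + 1) + 1 := by ring
        rw [this]
        exact h
      exact (mul_dvd_mul_iff_left hq0).mp hmul
    have h3 := ih a' b' h2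
    obtain ⟨c, hc⟩ := h3
    refine ⟨c, ?_⟩
    have : (q * a') ^ 2 + (q * b') ^ 2 = (q : ℤ) ^ 2 * (a' ^ 2 + b' ^ 2) := by ring
    rw [this, hc]
    ring

/-- Key step: with `e = v_q(m)` odd, each coordinate sum of squares `a²+b²` with
`z² = m² - m(a²+b²)` is divisible by `q^(e+1)`. -/
lemma keyStep (q m : ℕ) (hq : q.Prime) (hq3 : q % 4 = 3) (hm : m ≠ 0)
    (he : Odd (m.factorization q)) (a b z : ℤ)
    (hid : z ^ 2 = (m : ℤ) ^ 2 - (m : ℤ) * (a ^ 2 + b ^ 2)) :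
    (q : ℤ) ^ (m.factorization q + 1) ∣ a ^ 2 + b ^ 2 := by
  set e := m.factorization q with hedef
  rcases eq_or_ne (a ^ 2 + b ^ 2) 0 with h0 | h0
  · simp [h0]
  obtain ⟨s, hs⟩ : ∃ s : ℕ, (s : ℤ) = a ^ 2 + b ^ 2 :=
    ⟨(a ^ 2 + b ^ 2).toNat, Int.toNat_of_nonneg (by positivity)⟩
  have hs0 : s ≠ 0 := by
    intro hc
    rw [hc] at hs
    exact h0 (by exact_mod_cast hs.symm)
  set α := s.factorization q with hαdef
  have hαs : q ^ α ∣ s := Nat.ordProj_dvd s q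
  have hαs1 : ¬ q ^ (α + 1) ∣ s := by
    rw [hq.pow_dvd_iff_le_factorization hs0]
    omega
  have hαeven : Even α := by
    by_contra hodd
    obtain ⟨k, hk⟩ := Nat.not_even_iff_odd.mp hodd
    apply hαs1
    have h1 : (q : ℤ) ^ (2 * k + 1) ∣ a ^ 2 + b ^ 2 := by
      rw [← hs]
      exact_mod_cast Int.natCast_dvd_natCast.mpr (hk ▸ hαs)
    have h2 := lemA q hq hq3 k a b h1
    rw [← hs] at h2
    have h3 : q ^ (2 * k + 2) ∣ s := by exact_mod_cast h2
    have : α + 1 = 2 * k + 2 := by omega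
    rw [this]
    exact h3
  -- enough to show q^(e+1) ∣ s
  suffices hgoal : q ^ (e + 1) ∣ s by
    rw [← hs]
    exact_mod_cast Int.natCast_dvd_natCast.mpr hgoal
  rcases le_or_gt (e + 1) α with hle | hlt
  · exact dvd_trans (pow_dvd_pow q hle) hαs
  -- now α ≤ e, and α ≠ e by parity, so α < e
  have hαe : α < e := by
    rcases Nat.lt_or_ge α e with h | h
    · exact h
    · exfalso
      have : α = e := by omega
      rw [this] at hαeven
      exact (Nat.not_odd_iff_even.mpr hαeven) he
  exfalso
  have hqe : q ^ e ∣ m := Nat.ordProj_dvd m q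
  have hqe1 : ¬ q ^ (e + 1) ∣ m := by
    rw [hq.pow_dvd_iff_le_factorization hm]
    omega
  have hq2e : q ^ (2 * e) ∣ m ^ 2 := by
    have := pow_dvd_pow_of_dvd hqe 2
    rwa [← pow_mul, mul_comm e 2] at this
  -- identity in ℤ with s
  have hid' : z ^ 2 = (m : ℤ) ^ 2 - (m : ℤ) * s := by rw [hs]; exact hid
  rcases eq_or_ne z 0 with hz | hz
  · -- then m * s = m², so s = m, so α = e, contradiction
    rw [hz] at hid'
    have : (m : ℤ) * s = (m : ℤ) * m := by linarith [hid']
    have hsm : s = m := by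
      have hm' : (m : ℤ) ≠ 0 := by exact_mod_cast hm
      have := mul_left_cancel₀ hm' this
      exact_mod_cast this
    rw [hsm] at hαdef
    omega
  · set t := z.natAbs with htdef
    have ht0 : t ≠ 0 := Int.natAbs_ne_zero.mpr hz
    have htz : ((t : ℤ)) ^ 2 = z ^ 2 := by
      rw [htdef, Int.natCast_natAbs, sq_abs]
    have hms0 : m * s ≠ 0 := Nat.mul_ne_zero hm hs0
    have hmsfac : (m * s).factorization q = e + α := by
      rw [Nat.factorization_mul hm hs0]
      simp [hedef, hαdef]
    have hdvd1 : q ^ (e + α) ∣ t ^ 2 := by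
      rw [← Int.natCast_dvd_natCast]
      push_cast
      rw [htz, hid']
      apply dvd_sub
      · have : (q : ℤ) ^ (2 * e) ∣ (m : ℤ) ^ 2 := by exact_mod_cast Int.natCast_dvd_natCast.mpr hq2e
        exact dvd_trans (pow_dvd_pow _ (by omega)) this
      · have h1 : (q : ℤ) ^ e ∣ (m : ℤ) := by exact_mod_cast Int.natCast_dvd_natCast.mpr hqe
        have h2 : (q : ℤ) ^ α ∣ (s : ℤ) := by exact_mod_cast Int.natCast_dvd_natCast.mpr hαs
        have hmm := mul_dvd_mul h1 h2
        rwa [← pow_add] at hmm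
    have hdvd2 : ¬ q ^ (e + α + 1) ∣ t ^ 2 := by
      intro hcon
      have hconZ : (q : ℤ) ^ (e + α + 1) ∣ (m : ℤ) * s := by
        have hz2 : (q : ℤ) ^ (e + α + 1) ∣ (z : ℤ) ^ 2 := by
          rw [← htz]
          exact_mod_cast Int.natCast_dvd_natCast.mpr hcon
        have hm2 : (q : ℤ) ^ (e + α + 1) ∣ (m : ℤ) ^ 2 := by
          have : (q : ℤ) ^ (2 * e) ∣ (m : ℤ) ^ 2 := by exact_mod_cast Int.natCast_dvd_natCast.mpr hq2e
          exact dvd_trans (pow_dvd_pow _ (by omega)) this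
        have : (m : ℤ) * s = (m : ℤ) ^ 2 - z ^ 2 := by linarith [hid']
        rw [this]
        exact dvd_sub hm2 hz2
      have hconN : q ^ (e + α + 1) ∣ m * s := by
        have := hconZ
        rw [show ((m : ℤ) * s) = ((m * s : ℕ) : ℤ) by push_cast; ring] at this
        exact_mod_cast this
      rw [hq.pow_dvd_iff_le_factorization hms0, hmsfac] at hconN
      omega
    have hval : (t ^ 2).factorization q = e + α := by
      have ht20 : t ^ 2 ≠ 0 := pow_ne_zero 2 ht0
      have h1 : e + α ≤ (t ^ 2).factorization q :=
        (hq.pow_dvd_iff_le_factorization ht20).mp hdvd1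
      have h2 : (t ^ 2).factorization q ≤ e + α := by
        by_contra hc
        exact hdvd2 ((hq.pow_dvd_iff_le_factorization ht20).mpr (by omega))
      omega
    have heven2 : Even ((t ^ 2).factorization q) := by
      rw [Nat.factorization_pow]
      exact ⟨t.factorization q, by simp [two_mul]⟩
    rw [hval] at heven2
    rcases he with ⟨j, hj⟩
    rcases hαeven with ⟨i, hi⟩
    rcases heven2 with ⟨l, hl⟩
    omega

theorem stmt_7 :
    {m : ℕ | ∃ v w : Fin 3 → ℤ, (∑ k, v k * w k = 0) ∧
        (∑ k, v k * v k = (m : ℤ)) ∧ (∑ k, w k * w k = (m : ℤ))} =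
      {m : ℕ | ∃ a b : ℤ, a ^ 2 + b ^ 2 = (m : ℤ)} := by
  ext m
  simp only [Set.mem_setOf_eq]
  constructor
  · rintro ⟨v, w, h1, h2, h3⟩
    rcases eq_or_ne m 0 with rfl | hm
    · exact ⟨0, 0, by norm_num⟩
    simp only [Fin.sum_univ_three] at h1 h2 h3
    have key2 : ∀ q : ℕ, q.Prime → q % 4 = 3 → Even (padicValNat q m) := by
      intro q hq hq3
      rw [← Nat.factorization_def m hq]
      by_contra hcon
      have he : Odd (m.factorization q) := Nat.not_even_iff_odd.mp hcon
      have k0 := keyStep q m hq hq3 hm he (v 0) (w 0) (v 1 * w 2 - v 2 * w 1)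
        (by linear_combination (v 0 * w 0 - v 1 * w 1 - v 2 * w 2) * h1 +
          ((m : ℤ) - (w 0) ^ 2) * h2 + ((v 1) ^ 2 + (v 2) ^ 2) * h3)
      have k1 := keyStep q m hq hq3 hm he (v 1) (w 1) (v 2 * w 0 - v 0 * w 2)
        (by linear_combination (v 1 * w 1 - v 2 * w 2 - v 0 * w 0) * h1 +
          ((m : ℤ) - (w 1) ^ 2) * h2 + ((v 2) ^ 2 + (v 0) ^ 2) * h3)
      have k2 := keyStep q m hq hq3 hm he (v 2) (w 2) (v 0 * w 1 - v 1 * w 0)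
        (by linear_combination (v 2 * w 2 - v 0 * w 0 - v 1 * w 1) * h1 +
          ((m : ℤ) - (w 2) ^ 2) * h2 + ((v 0) ^ 2 + (v 1) ^ 2) * h3)
      set e := m.factorization q with hedef
      have hsum : (q : ℤ) ^ (e + 1) ∣ 2 * (m : ℤ) := by
        have hd := dvd_add (dvd_add k0 k1) k2
        have heq : ((v 0) ^ 2 + (w 0) ^ 2) + ((v 1) ^ 2 + (w 1) ^ 2) + ((v 2) ^ 2 + (w 2) ^ 2)
            = 2 * (m : ℤ) := by linear_combination h2 + h3
        rwa [heq] at hd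
      have hsumN : q ^ (e + 1) ∣ 2 * m := by
        have : ((q ^ (e + 1) : ℕ) : ℤ) ∣ ((2 * m : ℕ) : ℤ) := by push_cast; exact hsum
        exact_mod_cast this
      have hqodd : ¬ q ∣ 2 := by
        intro hc
        have h2 := Nat.le_of_dvd (by norm_num) hc
        omega
      have hcop : Nat.Coprime (q ^ (e + 1)) 2 :=
        Nat.Coprime.pow_left _ (hq.coprime_iff_not_dvd.mpr hqodd)
      have hdm : q ^ (e + 1) ∣ m := hcop.dvd_of_dvd_mul_left hsumN
      rw [hq.pow_dvd_iff_le_factorization hm] at hdm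
      omega
    obtain ⟨x, y, hxy⟩ := Nat.eq_sq_add_sq_iff.mpr (fun q hq hq3 => key2 q (Nat.prime_of_mem_primeFactors hq) hq3)
    exact ⟨(x : ℤ), (y : ℤ), by rw [hxy]; push_cast; ring⟩
  · rintro ⟨a, b, hab⟩
    refine ⟨![a, b, 0], ![-b, a, 0], ?_, ?_, ?_⟩ <;>
      simp [Fin.sum_univ_three] <;>
      first
      | linear_combination hab
      | ring
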